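/- Let ( , )₀ be positive definite with monic orthogonal polynomials {P_n} and B a positive definite multiple Geronimus transform with monic orthogonal polynomials P_n^* = P_n + Σ_{k=1}^N A_{n−k}^{[n]} P_{n−k}. Let J^* = (B(h P̂_n^*, P̂_m^*))_{n,m≥0} be the symmetric matrix in the orthonormal basis P̂_n^* = P_n^*/h_n^*, h_n^* = B(P_n^*,P_n^*)^{1/2}. Then J^* = C C^T, where C is the lower triangular banded matrix with entries C_{n,n−k} = A_{n−k}^{[n]} h_{n−k} / h_n^* for 0 ≤ k ≤ N (with A_n^{[n]}=1), where h_j = (P_j,P_j)₀^{1/2}. In particular the diagonal entries of C are positive. -/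

import Mathlib

open Polynomial

theorem cholesky_factorization_of_Jstar (N : ℕ) (hN : 1 ≤ N)
    (h : Polynomial ℝ) (hmonic : h.Monic) (hdeg : h.natDegree = N)
    (B₀ B : Polynomial ℝ →ₗ[ℝ] Polynomial ℝ →ₗ[ℝ] ℝ)
    (hsym₀ : ∀ f g, B₀ f g = B₀ g f) (hsym : ∀ f g, B f g = B g f)
    (hpos₀ : ∀ q : Polynomial ℝ, q ≠ 0 → 0 < B₀ q q)
    (hpos : ∀ q : Polynomial ℝ, q ≠ 0 → 0 < B q q)
    (hrel : ∀ f g, B (h * f) g = B₀ f g) (hrel' : ∀ f g, B f (h * g) = B₀ f g)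
    (P : ℕ → Polynomial ℝ)
    (hPmonic : ∀ n, (P n).Monic) (hPdeg : ∀ n, (P n).natDegree = n)
    (hPorth : ∀ n : ℕ, ∀ q : Polynomial ℝ, q.degree < n → B₀ (P n) q = 0)
    (Pstar : ℕ → Polynomial ℝ)
    (hQmonic : ∀ n, (Pstar n).Monic) (hQdeg : ∀ n, (Pstar n).natDegree = n)
    (hQorth : ∀ n : ℕ, ∀ q : Polynomial ℝ, q.degree < n → B (Pstar n) q = 0)
    (A : ℕ → ℕ → ℝ)
    (hPstar : ∀ n, Pstar n =
      P n + ∑ k ∈ Finset.Icc 1 (min N n), C (A (n - k) n) * P (n - k))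
    (Cmat : Matrix ℕ ℕ ℝ)
    (hC : ∀ n m : ℕ, Cmat n m =
      if m ≤ n ∧ n ≤ m + N then
        (if m = n then (1 : ℝ) else A m n) *
          Real.sqrt (B₀ (P m) (P m)) / Real.sqrt (B (Pstar n) (Pstar n))
      else 0) :
    ∀ n m : ℕ,
      (B (h * Pstar n) (Pstar m) /
          (Real.sqrt (B (Pstar n) (Pstar n)) * Real.sqrt (B (Pstar m) (Pstar m)))
        = ∑' k, Cmat n k * Cmat m k) ∧ 0 < Cmat n n := by
  have hPne : ∀ n, P n ≠ 0 := fun n => (hPmonic n).ne_zero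
  have hQne : ∀ n, Pstar n ≠ 0 := fun n => (hQmonic n).ne_zero
  have hdegP : ∀ n : ℕ, (P n).degree = (n : WithBot ℕ) := fun n => by
    rw [Polynomial.degree_eq_natDegree (hPne n), hPdeg]
  have horth : ∀ j k : ℕ, j ≠ k → B₀ (P j) (P k) = 0 := by
    intro j k hjk
    rcases lt_or_gt_of_ne hjk with hlt | hlt
    · rw [hsym₀]
      exact hPorth k (P j) (by rw [hdegP]; exact_mod_cast hlt)
    · exact hPorth j (P k) (by rw [hdegP]; exact_mod_cast hlt)
  set a : ℕ → ℕ → ℝ := fun n j =>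
    if j ≤ n ∧ n ≤ j + N then (if j = n then 1 else A j n) else 0 with ha
  have hCeq : ∀ n m, Cmat n m =
      a n m * Real.sqrt (B₀ (P m) (P m)) / Real.sqrt (B (Pstar n) (Pstar n)) := by
    intro n m
    rw [hC]
    by_cases hcond : m ≤ n ∧ n ≤ m + N
    · simp only [ha, if_pos hcond]
    · simp only [ha, if_neg hcond, zero_mul, zero_div]
  have hann : ∀ n, a n n = 1 := by intro n; simp [ha]
  have hexp : ∀ n, Pstar n = ∑ j ∈ Finset.range (n + 1), a n j • P j := by
    intro n
    rw [hPstar n, Finset.sum_range_succ, hann, one_smul, add_comm]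
    congr 1
    have hsub : Finset.Ico (n - min N n) n ⊆ Finset.range n := by
      intro x hx
      simp only [Finset.mem_Ico, Finset.mem_range] at hx ⊢
      exact hx.2
    rw [← Finset.sum_subset hsub (by
      intro x hx hx'
      simp only [Finset.mem_Ico, Finset.mem_range] at hx hx'
      have hxa : ¬ (n ≤ x + N) := by omega
      simp [ha, hxa])]
    refine Finset.sum_nbij' (fun k => n - k) (fun j => n - j) ?_ ?_ ?_ ?_ ?_
    · intro k hk
      simp only [Finset.mem_Icc] at hk
      simp only [Finset.mem_Ico]
      omega
    · intro j hj
      simp only [Finset.mem_Ico] at hj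
      simp only [Finset.mem_Icc]
      omega
    · intro k hk
      simp only [Finset.mem_Icc] at hk
      show n - (n - k) = k
      omega
    · intro j hj
      simp only [Finset.mem_Ico] at hj
      show n - (n - j) = j
      omega
    · intro k hk
      simp only [Finset.mem_Icc] at hk
      have h1 : n - k ≤ n ∧ n ≤ n - k + N := by omega
      have h2 : n - k ≠ n := by omega
      rw [smul_eq_C_mul]
      simp [ha, h1, h2]
  have hBkey : ∀ n m, B₀ (Pstar n) (Pstar m) =
      ∑ j ∈ Finset.range (n + 1), a n j * a m j * B₀ (P j) (P j) := by
    intro n m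
    rw [hexp n, hexp m]
    simp only [map_sum, map_smul, LinearMap.sum_apply, LinearMap.smul_apply,
      smul_eq_mul, Finset.mul_sum]
    rw [Finset.sum_comm]
    refine Finset.sum_congr rfl fun j hj => ?_
    rw [Finset.sum_eq_single j]
    · ring
    · intro k hk hkj
      simp [horth j k (Ne.symm hkj), horth k j hkj]
    · intro hj'
      simp only [Finset.mem_range, not_lt] at hj'
      have hz : a m j = 0 := by
        have : ¬ (j ≤ m) := by omega
        simp [ha, this]
      simp [hz]
  intro n m
  constructor
  · have hsupp : ∀ k ∉ Finset.range (n + 1), Cmat n k * Cmat m k = 0 := by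
      intro k hk
      simp only [Finset.mem_range, not_lt] at hk
      have hz : a n k = 0 := by
        have : ¬ (k ≤ n) := by omega
        simp [ha, this]
      rw [hCeq, hz]
      simp
    rw [tsum_eq_sum hsupp, hrel, hBkey n m, Finset.sum_div]
    refine Finset.sum_congr rfl ?_
    intro k _
    rw [hCeq n k, hCeq m k]
    have hbk : (0:ℝ) ≤ B₀ (P k) (P k) := (hpos₀ (P k) (hPne k)).le
    rw [show a n k * a m k * B₀ (P k) (P k)
        = a n k * a m k * (Real.sqrt (B₀ (P k) (P k)) * Real.sqrt (B₀ (P k) (P k))) by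
      rw [Real.mul_self_sqrt hbk]]
    ring
  · rw [hCeq n n, hann]
    have h1 : 0 < Real.sqrt (B₀ (P n) (P n)) :=
      Real.sqrt_pos.mpr (hpos₀ (P n) (hPne n))
    have h2 : 0 < Real.sqrt (B (Pstar n) (Pstar n)) :=
      Real.sqrt_pos.mpr (hpos (Pstar n) (hQne n))
    positivity
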